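/- For all n ≥ 2, every 1-cocycle δ : GL(n,ℤ) → ℤⁿ is a coboundary. In particular, if δ vanishes on SL(n,ℤ) and T ∈ GL(n,ℤ) has determinant −1, then δ(T) = 0. -/

import Mathlib

open Matrix

/-- A transvection matrix as an element of `GL (Fin n) ℤ`. -/
def tGL {n : ℕ} (i j : Fin n) (h : i ≠ j) : GL (Fin n) ℤ :=
  ⟨transvection i j 1, transvection i j (-1),
   by rw [transvection_mul_transvection_same _ _ h]; simp [transvection],
   by rw [transvection_mul_transvection_same _ _ h]; simp [transvection]⟩

lemma tGL_mulVec {n : ℕ} (i j : Fin n) (w : Fin n → ℤ) (k : Fin n) :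
    (transvection i j (1:ℤ)).mulVec w k = w k + if k = i then w j else 0 := by
  simp [transvection, add_mulVec, one_mulVec, mulVec, dotProduct, Matrix.single,
    ite_and, add_mul, Finset.sum_add_distrib, Matrix.one_apply, ite_mul, boole_mul,
    Finset.sum_ite_eq, eq_comm]

lemma tGL_val {n : ℕ} (i j : Fin n) (h : i ≠ j) :
    ((tGL i j h : GL (Fin n) ℤ) : Matrix (Fin n) (Fin n) ℤ) = transvection i j 1 := rfl

/-- For `n ≥ 2`, every 1-cocycle `δ : GL(n,ℤ) → ℤⁿ` is a coboundary.
In particular, if `δ` vanishes on `SL(n,ℤ)` and `T` has determinant `-1`,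
then `δ T = 0`. -/
theorem gln_cocycle_is_coboundary {n : ℕ} (hn : 2 ≤ n)
    (δ : GL (Fin n) ℤ → (Fin n → ℤ))
    (hδ : ∀ g h : GL (Fin n) ℤ,
      δ (g * h) = δ g + (g : Matrix (Fin n) (Fin n) ℤ).mulVec (δ h)) :
    (∃ y : Fin n → ℤ, ∀ g : GL (Fin n) ℤ,
      δ g = y - (g : Matrix (Fin n) (Fin n) ℤ).mulVec y) ∧
    ((∀ g : GL (Fin n) ℤ, (g : Matrix (Fin n) (Fin n) ℤ).det = 1 → δ g = 0) →
      ∀ T : GL (Fin n) ℤ, (T : Matrix (Fin n) (Fin n) ℤ).det = -1 → δ T = 0) := by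
  -- a partner index i ≠ j for any j
  have hpartner : ∀ j : Fin n, ∃ i : Fin n, i ≠ j := by
    intro j
    haveI : Nontrivial (Fin n) := Fin.nontrivial_iff_two_le.mpr hn
    exact exists_ne j
  set v : Fin n → ℤ := δ (-1) with hv
  -- key identity: 2 • δ g = v - g.mulVec v
  have key : ∀ (g : GL (Fin n) ℤ) (k : Fin n),
      2 * δ g k = v k - ((g : Matrix (Fin n) (Fin n) ℤ).mulVec v) k := by
    intro g k
    have ha := hδ g (-1)
    have hb := hδ (-1) g
    rw [show g * (-1) = (-1) * g by rw [mul_neg_one, neg_one_mul]] at ha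
    rw [hb] at ha
    have := congrFun ha k
    simp only [Units.val_neg, Units.val_one, neg_mulVec, one_mulVec, Pi.add_apply,
      Pi.neg_apply, ← hv] at this
    linarith
  -- v is even
  have heven : ∀ j : Fin n, 2 ∣ v j := by
    intro j
    obtain ⟨i, hij⟩ := hpartner j
    have hk := key (tGL i j hij) i
    rw [tGL_val, tGL_mulVec] at hk
    simp only [if_true, eq_self_iff_true] at hk
    exact ⟨-(δ (tGL i j hij) i), by linarith⟩
  set y : Fin n → ℤ := fun j => v j / 2 with hy
  have hvy : ∀ j, v j = 2 * y j := fun j => (Int.mul_ediv_cancel' (heven j)).symm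
  have cob : ∀ g : GL (Fin n) ℤ,
      δ g = y - (g : Matrix (Fin n) (Fin n) ℤ).mulVec y := by
    intro g
    funext k
    have hk := key g k
    have hveq : v = (2:ℤ) • y := funext fun j => by
      simpa [smul_eq_mul] using hvy j
    rw [hveq, Matrix.mulVec_smul] at hk
    have hvk := hvy k
    simp only [Pi.smul_apply, smul_eq_mul] at hk
    rw [hveq] at hvk
    simp only [Pi.smul_apply, smul_eq_mul] at hvk
    have : 2 * δ g k = 2 * (y k - (g : Matrix (Fin n) (Fin n) ℤ).mulVec y k) := by
      rw [mul_sub]; linarith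
    have h2 : (2:ℤ) ≠ 0 := by norm_num
    simpa [Pi.sub_apply] using mul_left_cancel₀ h2 this
  refine ⟨⟨y, cob⟩, ?_⟩
  intro hSL T _
  have hy0 : y = 0 := by
    funext j
    obtain ⟨i, hij⟩ := hpartner j
    have hdet : ((tGL i j hij : GL (Fin n) ℤ) : Matrix (Fin n) (Fin n) ℤ).det = 1 := by
      rw [tGL_val]; exact det_transvection_of_ne i j hij 1
    have h0 := hSL _ hdet
    have := congrFun ((cob (tGL i j hij)).symm.trans h0) i
    rw [Pi.sub_apply, tGL_val, tGL_mulVec, if_pos rfl] at this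
    simp only [Pi.zero_apply] at this ⊢
    linarith
  rw [cob T, hy0]
  simp
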